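/- Let A^+ = (a^+_{j-k} + a^+_{j+k+1})_{j,k≥0} with a^+_n = a^+_{-n}, and set a_k^# = 2a^+_k + a^+_{k-1} + a^+_{k+1}, A^# = (a^#_{j-k} + a^#_{j+k})_{j,k≥0}. Let D_- be the lower bidiagonal infinite matrix with 1 on both the diagonal and subdiagonal, and R = diag(1/2, 1, 1, ...). Then D_- A^+ D_-^T = R A^# R. -/

import Mathlib

lemma tsum_support_pair (f : ℕ → ℂ) (b : ℕ)
    (h : ∀ l, l ≠ b → l ≠ b + 1 → f l = 0) :
    ∑' l, f l = f b + f (b + 1) := by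
  rw [tsum_eq_sum (s := ({b, b+1} : Finset ℕ))
      (by intro l hl; simp at hl; exact h l hl.1 hl.2)]
  rw [Finset.sum_insert (by simp), Finset.sum_singleton]

/-- `D₋ A⁺ D₋ᵀ = R A^# R`, where `A⁺ = (a⁺_{j-k} + a⁺_{j+k+1})`,
`a^#_k = 2a⁺_k + a⁺_{k-1} + a⁺_{k+1}`, `A^# = (a^#_{j-k} + a^#_{j+k})`,
`D₋ = T(1+z)` and `R = diag(1/2, 1, 1, …)`. -/
theorem Dminus_Aplus_Dminus (ap ash : ℤ → ℂ) (heven : ∀ n : ℤ, ap n = ap (-n))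
    (hash : ∀ k : ℤ, ash k = 2 * ap k + ap (k - 1) + ap (k + 1))
    (Ap Ash : ℕ → ℕ → ℂ) (Dm R : ℕ → ℕ → ℂ)
    (hAp : ∀ j k : ℕ, Ap j k = ap ((j : ℤ) - k) + ap ((j : ℤ) + k + 1))
    (hAsh : ∀ j k : ℕ, Ash j k = ash ((j : ℤ) - k) + ash ((j : ℤ) + k))
    (hDm : ∀ j k : ℕ, Dm j k = if j = k then 1 else if (j : ℤ) = k + 1 then 1 else 0)
    (hR : ∀ j k : ℕ, R j k = if j = k then (if j = 0 then (1 : ℂ) / 2 else 1) else 0) :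
    ∀ j k : ℕ, (∑' i : ℕ, ∑' l : ℕ, Dm j i * Ap i l * Dm k l) =
      ∑' i : ℕ, ∑' l : ℕ, R j i * Ash i l * R l k := by
  intro j k
  -- RHS evaluates to the diagonal term
  have rhs : (∑' i : ℕ, ∑' l : ℕ, R j i * Ash i l * R l k)
      = R j j * Ash j k * R k k := by
    have h1 : ∀ i, (∑' l : ℕ, R j i * Ash i l * R l k) = R j i * Ash i k * R k k :=
      fun i => tsum_eq_single k (fun l hl => by simp [hR, hl])
    simp_rw [h1]
    exact tsum_eq_single j (fun i hi => by simp [hR, Ne.symm hi])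
  rw [rhs]
  -- Dm entry lemmas
  have hDm0 : ∀ l : ℕ, l ≠ 0 → Dm 0 l = 0 := by
    intro l hl; rw [hDm, if_neg (Ne.symm hl), if_neg (by omega)]
  have hDmS : ∀ b l : ℕ, l ≠ b → l ≠ b + 1 → Dm (b+1) l = 0 := by
    intro b l h1 h2; rw [hDm, if_neg (by omega), if_neg (by push_cast; omega)]
  have hDmd : ∀ b : ℕ, Dm b b = 1 := by intro b; simp [hDm]
  have hDms : ∀ b : ℕ, Dm (b+1) b = 1 := by
    intro b; rw [hDm, if_neg (by omega), if_pos (by push_cast; ring)]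
  rcases k with _ | b
  · have hin : ∀ i, (∑' l : ℕ, Dm j i * Ap i l * Dm 0 l) = Dm j i * Ap i 0 := by
      intro i
      rw [tsum_eq_single 0 (fun l hl => by rw [hDm0 l hl]; ring), hDmd]; ring
    simp_rw [hin]
    rcases j with _ | a
    · rw [tsum_eq_single 0 (fun i hi => by rw [hDm0 i hi]; ring), hDmd]
      simp only [hAp, hAsh, hash, hR, if_pos rfl]
      push_cast
      linear_combination (norm := ring_nf) (1/4 : ℂ) * heven 1 + (1/4 : ℂ) * heven 1
    · rw [tsum_support_pair (fun i => Dm (a+1) i * Ap i 0) a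
        (fun i h1 h2 => by rw [hDmS a i h1 h2]; ring), hDms, hDmd]
      simp only [hAp, hAsh, hash, hR, if_pos rfl, if_neg (Nat.succ_ne_zero a)]
      push_cast
      ring_nf
  · have hin : ∀ i, (∑' l : ℕ, Dm j i * Ap i l * Dm (b+1) l)
        = Dm j i * (Ap i b + Ap i (b+1)) := by
      intro i
      rw [tsum_support_pair (fun l => Dm j i * Ap i l * Dm (b+1) l) b
        (fun l h1 h2 => by rw [hDmS b l h1 h2]; ring), hDms, hDmd]
      ring
    simp_rw [hin]
    rcases j with _ | a
    · rw [tsum_eq_single 0 (fun i hi => by rw [hDm0 i hi]; ring), hDmd]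
      simp only [hAp, hAsh, hash, hR, if_pos rfl, if_neg (Nat.succ_ne_zero b)]
      push_cast
      linear_combination (norm := ring_nf)
        (1/2 : ℂ) * heven ((b:ℤ)+2) - (1/2 : ℂ) * heven (b:ℤ)
    · rw [tsum_support_pair (fun i => Dm (a+1) i * (Ap i b + Ap i (b+1))) a
        (fun i h1 h2 => by rw [hDmS a i h1 h2]; ring), hDms, hDmd]
      simp only [hAp, hAsh, hash, hR, if_pos rfl, if_neg (Nat.succ_ne_zero a),
        if_neg (Nat.succ_ne_zero b)]
      push_cast
      ring_nf
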